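/- arXiv:1703.10552 — 5 statements merged into one kernel-verified Lean document; each statement's English description precedes it below -/
import Mathlib

section
/- Let Θ : P ⇉ X be a set-valued mapping between metric spaces with closed values and let (p̄, x̄) ∈ graph Θ. Then Θ is uniformly hemiregular at (p̄, x̄) (i.e., there exist κ, r > 0 such that dist(p̄, Θ⁻¹(x)) ≤ κ·d(x, z) for all z ∈ Θ(p̄) ∩ B(x̄, r) and all x ∈ B(z, r)) if and only if there exist κ, δ > 0 such that dist(p̄, Θ⁻¹(x)) ≤ κ·dist(x, Θ(p̄)) for all x ∈ B(x̄, δ). -/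
/-- Equivalent reformulations of uniform metric hemiregularity
(Remark 2.1 of the paper). -/
theorem uniform_hemiregularity_iff {P X : Type*} [MetricSpace P] [MetricSpace X]
    (Θ : P → Set X) (hclosed : ∀ p, IsClosed (Θ p))
    (pb : P) (xb : X) (hgraph : xb ∈ Θ pb) :
    (∃ κ r : ℝ, 0 < κ ∧ 0 < r ∧ ∀ z ∈ Θ pb ∩ Metric.closedBall xb r,
        ∀ x ∈ Metric.closedBall z r,
          EMetric.infEdist pb {p | x ∈ Θ p} ≤ ENNReal.ofReal κ * edist x z) ↔
    (∃ κ δ : ℝ, 0 < κ ∧ 0 < δ ∧ ∀ x ∈ Metric.closedBall xb δ,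
        EMetric.infEdist pb {p | x ∈ Θ p} ≤
          ENNReal.ofReal κ * EMetric.infEdist x (Θ pb)) := by
  constructor
  · rintro ⟨κ, r, hκ, hr, H⟩
    refine ⟨κ, r / 3, hκ, by linarith, ?_⟩
    intro x hx
    have hne : (Θ pb).Nonempty := ⟨xb, hgraph⟩
    have hdfin : EMetric.infEdist x (Θ pb) ≠ ⊤ := Metric.infEdist_ne_top hne
    have hinf : EMetric.infEdist x (Θ pb) = ENNReal.ofReal (Metric.infDist x (Θ pb)) := by
      rw [Metric.infDist]; exact (ENNReal.ofReal_toReal hdfin).symm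
    have hxxb : dist x xb ≤ r / 3 := Metric.mem_closedBall.mp hx
    have hd_le : Metric.infDist x (Θ pb) ≤ r / 3 :=
      le_trans (Metric.infDist_le_dist_of_mem hgraph) hxxb
    have hd_nonneg : 0 ≤ Metric.infDist x (Θ pb) := Metric.infDist_nonneg
    apply ENNReal.le_of_forall_pos_le_add
    intro ε' hε' _
    have hε'R : (0 : ℝ) < (ε' : ℝ) := hε'
    set ε : ℝ := min ((ε' : ℝ) / κ) (r / 3) with hεdef
    have hεpos : 0 < ε := lt_min (div_pos hε'R hκ) (by linarith)
    obtain ⟨z, hzΘ, hzd⟩ := (Metric.infDist_lt_iff hne).mp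
      (lt_add_of_pos_right (Metric.infDist x (Θ pb)) hεpos)
    have hεle : ε ≤ r / 3 := min_le_right _ _
    have hxz : dist x z ≤ r := by linarith
    have hzxb : dist z xb ≤ r := by
      have := dist_triangle z x xb
      have hzx : dist z x = dist x z := dist_comm z x
      linarith
    have h1 := H z ⟨hzΘ, Metric.mem_closedBall.mpr hzxb⟩ x (Metric.mem_closedBall.mpr hxz)
    have hκε : κ * ε ≤ (ε' : ℝ) := by
      have : ε ≤ (ε' : ℝ) / κ := min_le_left _ _
      calc κ * ε ≤ κ * ((ε' : ℝ) / κ) := by nlinarith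
        _ = (ε' : ℝ) := by field_simp
    calc EMetric.infEdist pb {p | x ∈ Θ p} ≤ ENNReal.ofReal κ * edist x z := h1
      _ = ENNReal.ofReal (κ * dist x z) := by
          rw [edist_dist, ← ENNReal.ofReal_mul hκ.le]
      _ ≤ ENNReal.ofReal (κ * (Metric.infDist x (Θ pb) + ε)) :=
          ENNReal.ofReal_le_ofReal (by nlinarith)
      _ = ENNReal.ofReal (κ * Metric.infDist x (Θ pb)) + ENNReal.ofReal (κ * ε) := by
          rw [mul_add, ENNReal.ofReal_add (by positivity) (by positivity)]
      _ ≤ ENNReal.ofReal κ * EMetric.infEdist x (Θ pb) + (ε' : ENNReal) := by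
          gcongr
          · rw [hinf, ← ENNReal.ofReal_mul hκ.le]
          · calc ENNReal.ofReal (κ * ε) ≤ ENNReal.ofReal (ε' : ℝ) :=
                ENNReal.ofReal_le_ofReal hκε
              _ = (ε' : ENNReal) := ENNReal.ofReal_coe_nnreal
  · rintro ⟨κ, δ, hκ, hδ, H⟩
    refine ⟨κ, δ / 2, hκ, by linarith, ?_⟩
    rintro z ⟨hzΘ, hzb⟩ x hxz
    have hxb : x ∈ Metric.closedBall xb δ := by
      have h1 : dist x z ≤ δ / 2 := Metric.mem_closedBall.mp hxz
      have h2 : dist z xb ≤ δ / 2 := Metric.mem_closedBall.mp hzb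
      have := dist_triangle x z xb
      exact Metric.mem_closedBall.mpr (by linarith)
    calc EMetric.infEdist pb {p | x ∈ Θ p}
        ≤ ENNReal.ofReal κ * EMetric.infEdist x (Θ pb) := H x hxb
      _ ≤ ENNReal.ofReal κ * edist x z :=
          mul_le_mul_right (EMetric.infEdist_le_edist_of_mem hzΘ) _
end

section
/- Let Θ : ℝ² → ℝ be defined by Θ(p₁, p₂) = p₁ + p₂² if p₁ ≥ 0 and Θ(p₁, p₂) = p₁ − p₂² if p₁ < 0. Then Θ is not metrically regular around ((0,0), 0): for every κ > 0 and r > 0 there exist p ∈ B((0,0), r) and x ∈ B(0, r) such that dist(p, Θ⁻¹(x)) > κ·dist(x, {Θ(p)}). -/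
/-- The mapping Θ(p₁,p₂) = p₁ + p₂² (p₁ ≥ 0), p₁ − p₂² (p₁ < 0) is not
metrically regular around ((0,0),0). -/
theorem not_metrically_regular (Θ : EuclideanSpace ℝ (Fin 2) → ℝ)
    (hΘ : ∀ p, Θ p = if 0 ≤ p 0 then p 0 + (p 1) ^ 2 else p 0 - (p 1) ^ 2) :
    ∀ κ r : ℝ, 0 < κ → 0 < r →
      ∃ p ∈ Metric.closedBall (0 : EuclideanSpace ℝ (Fin 2)) r,
        ∃ x ∈ Metric.closedBall (0 : ℝ) r,
          κ * dist x (Θ p) < Metric.infDist p {q | Θ q = x} := by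
  intro κ r hκ hr
  set x : ℝ := min (r ^ 2 / 4) (min r (1 / (16 * κ ^ 2))) with hxdef
  have hx0 : 0 < x := by
    apply lt_min (by positivity) (lt_min hr (by positivity))
  have hxr : x ≤ r := le_trans (min_le_right _ _) (min_le_left _ _)
  have hsx0 : 0 < Real.sqrt x := Real.sqrt_pos.2 hx0
  -- √x ≤ r/2
  have hsr : Real.sqrt x ≤ r / 2 := by
    have : Real.sqrt x ≤ Real.sqrt (r ^ 2 / 4) := Real.sqrt_le_sqrt (min_le_left _ _)
    calc Real.sqrt x ≤ Real.sqrt (r ^ 2 / 4) := this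
      _ = r / 2 := by
          rw [show r ^ 2 / 4 = (r / 2) ^ 2 by ring, Real.sqrt_sq (by linarith)]
  -- √x ≤ 1/(4κ)
  have hsκ : Real.sqrt x ≤ 1 / (4 * κ) := by
    have : Real.sqrt x ≤ Real.sqrt (1 / (16 * κ ^ 2)) :=
      Real.sqrt_le_sqrt (le_trans (min_le_right _ _) (min_le_right _ _))
    calc Real.sqrt x ≤ Real.sqrt (1 / (16 * κ ^ 2)) := this
      _ = 1 / (4 * κ) := by
          rw [show 1 / (16 * κ ^ 2) = (1 / (4 * κ)) ^ 2 by field_simp; ring,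
            Real.sqrt_sq (by positivity)]
  set p : EuclideanSpace ℝ (Fin 2) := (WithLp.equiv 2 (Fin 2 → ℝ)).symm ![0, 2 * Real.sqrt x]
    with hpdef
  have hp0 : p 0 = 0 := rfl
  have hp1 : p 1 = 2 * Real.sqrt x := rfl
  have hΘp : Θ p = 4 * x := by
    rw [hΘ, hp0, hp1, if_pos le_rfl]
    rw [mul_pow, Real.sq_sqrt hx0.le]
    ring
  refine ⟨p, ?_, x, ?_, ?_⟩
  · -- p in closed ball r
    rw [Metric.mem_closedBall, dist_zero_right]
    rw [EuclideanSpace.norm_eq]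
    have : ∑ i, ‖p i‖ ^ 2 = (2 * Real.sqrt x) ^ 2 := by
      rw [Fin.sum_univ_two, hp0, hp1]
      simp [Real.norm_eq_abs, abs_of_nonneg (by positivity : (0:ℝ) ≤ 2 * Real.sqrt x)]
    rw [this, Real.sqrt_sq (by positivity)]
    linarith
  · rw [Metric.mem_closedBall, dist_zero_right, Real.norm_eq_abs, abs_of_pos hx0]
    exact hxr
  · -- main inequality
    have hd : dist x (Θ p) = 3 * x := by
      rw [hΘp, Real.dist_eq, abs_of_nonpos (by linarith)]
      ring
    rw [hd]
    have hlow : Real.sqrt x ≤ Metric.infDist p {q | Θ q = x} := by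
      have hne : ({q | Θ q = x} : Set (EuclideanSpace ℝ (Fin 2))).Nonempty := by
        refine ⟨(WithLp.equiv 2 (Fin 2 → ℝ)).symm ![x, 0], ?_⟩
        show Θ _ = x
        rw [hΘ]
        have h0 : ((WithLp.equiv 2 (Fin 2 → ℝ)).symm ![x, 0]) 0 = x := rfl
        have h1 : ((WithLp.equiv 2 (Fin 2 → ℝ)).symm ![x, 0]) 1 = 0 := rfl
        rw [h0, h1, if_pos hx0.le]
        ring
      by_contra hcon
      rw [not_le, Metric.infDist_lt_iff hne] at hcon
      obtain ⟨q, hq, hdq⟩ := hcon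
      have hq1 : q 1 ≤ Real.sqrt x := by
        have hΘq : Θ q = x := hq
        rw [hΘ] at hΘq
        by_cases h : 0 ≤ q 0
        · rw [if_pos h] at hΘq
          have : (q 1) ^ 2 ≤ x := by linarith
          calc q 1 ≤ |q 1| := le_abs_self _
            _ = Real.sqrt ((q 1) ^ 2) := (Real.sqrt_sq_eq_abs _).symm
            _ ≤ Real.sqrt x := Real.sqrt_le_sqrt this
        · rw [if_neg h] at hΘq
          push_neg at h
          nlinarith [sq_nonneg (q 1)]
      have hdd : dist (p 1) (q 1) ≤ dist p q := by
        rw [EuclideanSpace.dist_eq]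
        have : dist (p 1) (q 1) = Real.sqrt (dist (p 1) (q 1) ^ 2) := by
          rw [Real.sqrt_sq dist_nonneg]
        rw [this]
        apply Real.sqrt_le_sqrt
        rw [Fin.sum_univ_two]
        nlinarith [dist_nonneg (x := p 0) (y := q 0)]
      have h1 : Real.sqrt x ≤ dist (p 1) (q 1) := by
        rw [Real.dist_eq, hp1]
        calc Real.sqrt x = 2 * Real.sqrt x - Real.sqrt x := by ring
          _ ≤ 2 * Real.sqrt x - q 1 := by linarith
          _ ≤ |2 * Real.sqrt x - q 1| := le_abs_self _
      linarith
    have : κ * (3 * x) < Real.sqrt x := by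
      have hx : x = Real.sqrt x * Real.sqrt x := (Real.mul_self_sqrt hx0.le).symm
      have h34 : κ * Real.sqrt x ≤ 1 / 4 := by
        have := mul_le_mul_of_nonneg_left hsκ hκ.le
        calc κ * Real.sqrt x ≤ κ * (1 / (4 * κ)) := this
          _ = 1 / 4 := by field_simp
      nlinarith
    linarith
end

section
/- Let x̄ ∈ R be a local solution of the problem of minimizing φ over the closed set R ⊆ X, and let 𝓡 : P ⇉ X be a parameterization of R at (p̄, x̄), i.e. 𝓡(p̄) = R. If (i) 𝓡 is uniformly hemiregular at (p̄, x̄) with modulus κ₀ and (ii) the problem is calm at x̄ with respect to 𝓡 with modulus ζ₀, then for every l > κ₀·ζ₀ the penalty function x ↦ φ(x) + l·dist(x, R) attains a local minimum at x̄. -/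
/-- Theorem 3.1 (exact penalization): if the parameterization 𝓡 of the feasible
region R is uniformly hemiregular at (pb, xb) with modulus κ₀ and the problem is
calm at xb with modulus ζ₀, then the penalty function φ + l·dist(·,R) is exact at
xb for every l > κ₀·ζ₀. -/
theorem exact_penalization {P X : Type*} [MetricSpace P] [MetricSpace X]
    (φ : X → EReal) (R : Set X) (hRne : R.Nonempty) (hRcl : IsClosed R)
    (xb : X) (hxbR : xb ∈ R) (hfin : ∃ a : ℝ, φ xb = (a : EReal))
    (hlocmin : ∃ ε : ℝ, 0 < ε ∧ ∀ x ∈ R ∩ Metric.closedBall xb ε, φ xb ≤ φ x)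
    (𝓡 : P → Set X) (pb : P) (hpar : 𝓡 pb = R) (hclval : ∀ p, IsClosed (𝓡 p))
    (κ₀ ζ₀ : ℝ) (hκ₀nn : 0 ≤ κ₀) (hζ₀nn : 0 ≤ ζ₀)
    (hhemi : ∀ κ : ℝ, κ₀ < κ → ∃ δ : ℝ, 0 < δ ∧ ∀ x ∈ Metric.closedBall xb δ,
        EMetric.infEdist pb {p | x ∈ 𝓡 p} ≤ ENNReal.ofReal κ * EMetric.infEdist x R)
    (hcalm : ∀ ζ : ℝ, ζ₀ < ζ → ∃ r : ℝ, 0 < r ∧ ∀ p ∈ Metric.closedBall pb r,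
        ∀ x ∈ 𝓡 p ∩ Metric.closedBall xb r,
          φ xb - ((ζ * dist p pb : ℝ) : EReal) ≤ φ x) :
    ∀ l : ℝ, κ₀ * ζ₀ < l → ∃ ε : ℝ, 0 < ε ∧ ∀ x ∈ Metric.closedBall xb ε,
      φ xb ≤ φ x + ((l * Metric.infDist x R : ℝ) : EReal) := by
  intro l hl
  obtain ⟨ε₀, hε₀, hmin⟩ := hlocmin
  obtain ⟨a, ha⟩ := hfin
  have hlpos : 0 < l := lt_of_le_of_lt (mul_nonneg hκ₀nn hζ₀nn) hl
  set η : ℝ := min 1 ((l - κ₀ * ζ₀) / (2 * (κ₀ + ζ₀ + 1))) with hη_def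
  have hηpos : 0 < η := lt_min one_pos (div_pos (by linarith) (by positivity))
  set κ : ℝ := κ₀ + η with hκ_def
  set ζ : ℝ := ζ₀ + η with hζ_def
  have hζpos : 0 < ζ := by positivity
  have hκζ : κ * ζ < l := by
    have h1 : η ≤ 1 := min_le_left _ _
    have h2 : η ≤ (l - κ₀ * ζ₀) / (2 * (κ₀ + ζ₀ + 1)) := min_le_right _ _
    have h3 : η * (2 * (κ₀ + ζ₀ + 1)) ≤ l - κ₀ * ζ₀ := by
      rw [← le_div_iff₀ (by positivity)]; exact h2
    nlinarith [hηpos, hκ₀nn, hζ₀nn]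
  obtain ⟨δ, hδ, hH⟩ := hhemi κ (lt_add_of_pos_right _ hηpos)
  obtain ⟨r, hr, hC⟩ := hcalm ζ (lt_add_of_pos_right _ hηpos)
  refine ⟨min δ (min r (min ε₀ (r * ζ / l))), by positivity, ?_⟩
  intro x hx
  have hxδ : dist x xb ≤ δ := le_trans (Metric.mem_closedBall.mp hx) (min_le_left _ _)
  have hxr : dist x xb ≤ r :=
    le_trans (Metric.mem_closedBall.mp hx) (le_trans (min_le_right _ _) (min_le_left _ _))
  have hxε₀ : dist x xb ≤ ε₀ :=
    le_trans (Metric.mem_closedBall.mp hx)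
      (le_trans (min_le_right _ _) (le_trans (min_le_right _ _) (min_le_left _ _)))
  have hxrζ : dist x xb ≤ r * ζ / l :=
    le_trans (Metric.mem_closedBall.mp hx)
      (le_trans (min_le_right _ _) (le_trans (min_le_right _ _) (min_le_right _ _)))
  by_cases hxR : x ∈ R
  · have h0 : Metric.infDist x R = 0 := Metric.infDist_zero_of_mem hxR
    rw [h0, mul_zero]
    simpa using hmin x ⟨hxR, Metric.mem_closedBall.mpr hxε₀⟩
  · set d : ℝ := Metric.infDist x R with hd_def
    have hdpos : 0 < d := (hRcl.notMem_iff_infDist_pos hRne).mp hxR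
    have hdle : d ≤ dist x xb := Metric.infDist_le_dist_of_mem hxbR
    have hedist : EMetric.infEdist x R = ENNReal.ofReal d := by
      rw [hd_def, Metric.infDist, ENNReal.ofReal_toReal (Metric.infEdist_ne_top hRne)]; rfl
    have hκlt : κ < l / ζ := (lt_div_iff₀ hζpos).mpr hκζ
    have hlt : EMetric.infEdist pb {p | x ∈ 𝓡 p} < ENNReal.ofReal (l / ζ * d) := by
      refine lt_of_le_of_lt (hH x (Metric.mem_closedBall.mpr hxδ)) ?_
      rw [hedist, ← ENNReal.ofReal_mul (le_of_lt (lt_of_le_of_lt hκ₀nn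
        (lt_add_of_pos_right _ hηpos)))]
      exact ENNReal.ofReal_lt_ofReal_iff (by positivity) |>.mpr
        (by nlinarith)
    obtain ⟨p, hpS, hpd⟩ := EMetric.infEdist_lt_iff.mp hlt
    have hpdist : dist p pb < l / ζ * d := by
      rw [dist_comm]; exact (edist_lt_ofReal).mp hpd
    have hpr : p ∈ Metric.closedBall pb r := by
      rw [Metric.mem_closedBall]
      have : l / ζ * d ≤ r := by
        rw [div_mul_eq_mul_div, div_le_iff₀ hζpos] at *
        have := le_trans hdle hxrζ
        rw [le_div_iff₀ hlpos] at this
        nlinarith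
      linarith
    have hcal := hC p hpr x ⟨hpS, Metric.mem_closedBall.mpr hxr⟩
    set c : ℝ := ζ * dist p pb with hc_def
    have hcle : c ≤ l * d := by
      have h1 : c ≤ ζ * (l / ζ * d) := by
        rw [hc_def]; exact mul_le_mul_of_nonneg_left (le_of_lt hpdist) (le_of_lt hζpos)
      have h2 : ζ * (l / ζ * d) = l * d := by field_simp
      linarith
    rw [ha] at hcal ⊢
    have hsub : (a : EReal) - (c : EReal) = ((a - c : ℝ) : EReal) := by
      rw [EReal.coe_sub]
    rw [hsub] at hcal
    calc (a : EReal) ≤ (((a - c) + l * d : ℝ) : EReal) := by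
          exact_mod_cast by linarith
      _ = ((a - c : ℝ) : EReal) + ((l * d : ℝ) : EReal) := by rw [EReal.coe_add]
      _ ≤ φ x + ((l * d : ℝ) : EReal) := add_le_add_left hcal _
end

section
/- Let 𝓡 : P ⇉ X be a set-valued mapping between metric spaces, p̄ ∈ P, and x̄ ∈ 𝓡(p̄) a local minimizer of φ on 𝓡(p̄). Suppose (i) 𝓡 is calm at (p̄, x̄): there exist ζ, r > 0 with 𝓡(p) ∩ B(x̄, r) ⊆ B(𝓡(p̄), ζ·d(p, p̄)) for all p ∈ B(p̄, r); and (ii) there exists l > 0 such that x ↦ φ(x) + l·dist(x, 𝓡(p̄)) attains a local minimum at x̄. Then the problem of minimizing φ over 𝓡(p̄) is calm at x̄ with respect to 𝓡: there exist η, ζ' > 0 such that φ(x) ≥ φ(x̄) − ζ'·d(p, p̄) for all p ∈ B(p̄, η) and x ∈ B(x̄, η) ∩ 𝓡(p). -/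
/-- Proposition 3.1: calmness of the set-valued mapping 𝓡 at (pb,xb) together
with the exactness of some penalty function at xb implies problem calmness at xb
with respect to 𝓡. -/
theorem problem_calmness_sufficient {P X : Type*} [MetricSpace P] [MetricSpace X]
    (φ : X → EReal) (𝓡 : P → Set X) (hclval : ∀ p, IsClosed (𝓡 p))
    (pb : P) (xb : X) (hxb : xb ∈ 𝓡 pb) (hfin : ∃ a : ℝ, φ xb = (a : EReal))
    (hlocmin : ∃ ε : ℝ, 0 < ε ∧ ∀ x ∈ 𝓡 pb ∩ Metric.closedBall xb ε, φ xb ≤ φ x)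
    (hcalmR : ∃ ζ r : ℝ, 0 < ζ ∧ 0 < r ∧ ∀ p ∈ Metric.closedBall pb r,
        ∀ x ∈ 𝓡 p ∩ Metric.closedBall xb r,
          Metric.infDist x (𝓡 pb) ≤ ζ * dist p pb)
    (hexact : ∃ l : ℝ, 0 < l ∧ ∃ ε : ℝ, 0 < ε ∧ ∀ x ∈ Metric.closedBall xb ε,
        φ xb ≤ φ x + ((l * Metric.infDist x (𝓡 pb) : ℝ) : EReal)) :
    ∃ η ζ' : ℝ, 0 < η ∧ 0 < ζ' ∧ ∀ p ∈ Metric.closedBall pb η,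
      ∀ x ∈ 𝓡 p ∩ Metric.closedBall xb η,
        φ xb - ((ζ' * dist p pb : ℝ) : EReal) ≤ φ x := by
  obtain ⟨l, hl, ε, hε, hex⟩ := hexact
  obtain ⟨ζ, r, hζ, hr, hcal⟩ := hcalmR
  refine ⟨min r ε, l * ζ, lt_min hr hε, mul_pos hl hζ, ?_⟩
  intro p hp x hx
  have hpr : p ∈ Metric.closedBall pb r :=
    Metric.closedBall_subset_closedBall (min_le_left r ε) hp
  have hxr : x ∈ 𝓡 p ∩ Metric.closedBall xb r :=
    ⟨hx.1, Metric.closedBall_subset_closedBall (min_le_left r ε) hx.2⟩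
  have hxε : x ∈ Metric.closedBall xb ε :=
    Metric.closedBall_subset_closedBall (min_le_right r ε) hx.2
  have h1 : φ xb ≤ φ x + ((l * Metric.infDist x (𝓡 pb) : ℝ) : EReal) := hex x hxε
  have h2 : Metric.infDist x (𝓡 pb) ≤ ζ * dist p pb := hcal p hpr x hxr
  have h3 : (l * Metric.infDist x (𝓡 pb) : ℝ) ≤ l * ζ * dist p pb := by
    rw [mul_assoc]; exact mul_le_mul_of_nonneg_left h2 hl.le
  have h4 : φ xb ≤ φ x + ((l * ζ * dist p pb : ℝ) : EReal) :=
    h1.trans (add_le_add_right (EReal.coe_le_coe_iff.2 h3) _)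
  exact (EReal.sub_le_iff_le_add (.inl (EReal.coe_ne_bot _))
    (.inl (EReal.coe_ne_top _))).2 h4
end

section
/- Let F : P × X ⇉ Y be a set-valued mapping with closed values between metric spaces, ω ∈ Y, p̄ ∈ P, x̄ ∈ X with ω ∈ F(p̄, x̄), and define the solution mapping 𝓡(p) = {x : ω ∈ F(p, x)} and the displacement ν_F(p, x) = dist(ω, F(p, x)). Suppose: (i) P is a complete metric space; (ii) there is δ₀ > 0 such that for every x ∈ B(x̄, δ₀), the map p ↦ F(p, x) is Hausdorff upper semicontinuous on B(p̄, δ₀); (iii) F(p̄, ·) : X ⇉ Y is uniformly Lipschitz lower semicontinuous at (x̄, ω) with modulus κ₀; (iv) the strict outer slope of ν_F with respect to p at p̄ is positive, say equal to α₀ > 0. Then 𝓡 is uniformly hemiregular at (p̄, x̄) with modulus at most κ₀/α₀. -/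
open Filter Classical
open Topology

/-- Ekeland's variational principle for `ℝ≥0∞`-valued functions satisfying an
`ε`-lower-semicontinuity condition, on a complete metric space. -/
theorem ekeland_enn {α : Type*} [MetricSpace α] [CompleteSpace α]
    (f : α → ENNReal) (x₀ : α) (hx₀ : f x₀ ≠ ⊤)
    (lam : ENNReal) (hlam0 : lam ≠ 0) (hlamt : lam ≠ ⊤)
    (hf : ∀ p : α, ∀ ε : ℝ, 0 < ε → ∀ᶠ q in nhds p, f p ≤ f q + ENNReal.ofReal ε) :
    ∃ xs : α, f xs + lam * edist xs x₀ ≤ f x₀ ∧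
      ∀ z : α, f z + lam * edist z xs ≤ f xs → z = xs := by
  classical
  set S : α → Set α := fun x => {z | f z + lam * edist z x ≤ f x} with hS
  have hself : ∀ x, x ∈ S x := by intro x; simp [hS]
  have htrans : ∀ {x y z : α}, z ∈ S y → y ∈ S x → z ∈ S x := by
    intro x y z hzy hyx
    have h1 : f z + lam * edist z x ≤ f z + lam * (edist z y + edist y x) :=
      add_le_add_right (mul_le_mul_right (edist_triangle _ _ _) _) _
    calc f z + lam * edist z x
        ≤ f z + (lam * edist z y + lam * edist y x) := by rw [← mul_add]; exact h1
      _ = (f z + lam * edist z y) + lam * edist y x := by ring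
      _ ≤ f y + lam * edist y x := add_le_add_left hzy _
      _ ≤ f x := hyx
  have hstep : ∀ (x : α) (n : ℕ), ∃ z, z ∈ S x ∧
      f z ≤ (⨅ w ∈ S x, f w) + (2 : ENNReal)⁻¹ ^ n := by
    intro x n
    by_cases h : (⨅ w ∈ S x, f w) = ⊤
    · exact ⟨x, hself x, by simp [h]⟩
    · have hc : ((2 : ENNReal)⁻¹ ^ n) ≠ 0 := by
        apply pow_ne_zero; simp
      have hlt := ENNReal.lt_add_right h hc
      rw [iInf_lt_iff] at hlt
      obtain ⟨w, hw⟩ := hlt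
      rw [iInf_lt_iff] at hw
      obtain ⟨hwS, hwlt⟩ := hw
      exact ⟨w, hwS, hwlt.le⟩
  choose g hg1 hg2 using hstep
  set u : ℕ → α := fun n => Nat.rec x₀ (fun n xn => g xn n) n with hu
  have hu0 : u 0 = x₀ := rfl
  have husucc : ∀ n, u (n + 1) = g (u n) n := fun n => rfl
  have hmem : ∀ n, u (n + 1) ∈ S (u n) := fun n => by rw [husucc]; exact hg1 _ _
  have hmono : ∀ {n m : ℕ}, n ≤ m → u m ∈ S (u n) := by
    intro n m h
    induction m, h using Nat.le_induction with
    | base => exact hself _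
    | succ m hm ih => exact htrans (hmem m) ih
  have hfanti : ∀ {n m : ℕ}, n ≤ m → f (u m) ≤ f (u n) :=
    fun {n m} h => le_trans (self_le_add_right _ _) (hmono h)
  have hfnetop : ∀ n, f (u n) ≠ ⊤ := fun n =>
    ne_top_of_le_ne_top hx₀ (hu0 ▸ hfanti (Nat.zero_le n))
  set L := ⨅ n, f (u n) with hL
  have hLtop : L ≠ ⊤ := ne_top_of_le_ne_top (hfnetop 0) (iInf_le _ 0)
  have hLle : ∀ n, L ≤ f (u n) := fun n => iInf_le _ n
  have hcauchy : CauchySeq u := by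
    rw [EMetric.cauchySeq_iff]
    intro ε hε
    set ε' := min ε 1 with hε'
    have hε'0 : ε' ≠ 0 := by
      simp only [hε', ne_eq, min_eq_iff, not_or]
      constructor <;> intro h <;> simp_all [pos_iff_ne_zero]
    have hc0 : lam * ε' ≠ 0 := mul_ne_zero hlam0 hε'0
    have hlt : L < L + lam * ε' := ENNReal.lt_add_right hLtop hc0
    rw [hL, iInf_lt_iff] at hlt
    obtain ⟨N, hN⟩ := hlt
    have key : ∀ {n m : ℕ}, N ≤ n → n ≤ m → edist (u m) (u n) < ε := by
      intro n m hn hnm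
      have h1 : f (u m) + lam * edist (u m) (u n) ≤ f (u n) := hmono hnm
      have h2 : f (u n) < f (u m) + lam * ε' :=
        lt_of_le_of_lt (hfanti hn) (lt_of_lt_of_le hN (add_le_add_left (hLle m) _))
      have h3 : f (u m) + lam * edist (u m) (u n) < f (u m) + lam * ε' :=
        lt_of_le_of_lt h1 h2
      have h4 : lam * edist (u m) (u n) < lam * ε' :=
        (ENNReal.add_lt_add_iff_left (hfnetop m)).mp h3
      have h5 : edist (u m) (u n) < ε' :=
        (ENNReal.mul_lt_mul_iff_right hlam0 hlamt).mp h4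
      exact lt_of_lt_of_le h5 (min_le_left _ _)
    refine ⟨N, fun m hm n hn => ?_⟩
    rcases le_total n m with h | h
    · exact key hn h
    · rw [edist_comm]; exact key hm h
  obtain ⟨xs, hxs⟩ := cauchySeq_tendsto_of_complete hcauchy
  have hedist0 : Tendsto (fun m => edist xs (u m)) atTop (𝓝 0) := by
    have h := (tendsto_const_nhds (x := xs) (f := atTop)).edist hxs
    simpa using h
  have hfL : Tendsto (fun n => f (u n)) atTop (𝓝 L) :=
    tendsto_atTop_iInf (fun n m h => hfanti h)
  have hfxs : f xs ≤ L := by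
    apply ENNReal.le_of_forall_pos_le_add
    intro ε hε _
    have hhalf : (0 : ℝ) < ε / 2 := by positivity
    have h1 : ∀ᶠ m in atTop, f xs ≤ f (u m) + ENNReal.ofReal (ε / 2) :=
      hxs.eventually (hf xs (ε / 2) hhalf)
    have h2 : ∀ᶠ m in atTop, f (u m) < L + ENNReal.ofReal (ε / 2) :=
      hfL.eventually_lt_const (ENNReal.lt_add_right hLtop
        (by simp [ENNReal.ofReal_eq_zero, not_le, hhalf]))
    obtain ⟨m, hm1, hm2⟩ := (h1.and h2).exists
    calc f xs ≤ f (u m) + ENNReal.ofReal (ε / 2) := hm1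
      _ ≤ (L + ENNReal.ofReal (ε / 2)) + ENNReal.ofReal (ε / 2) := add_le_add_left hm2.le _
      _ = L + (ENNReal.ofReal (ε / 2) + ENNReal.ofReal (ε / 2)) := by ring
      _ = L + ENNReal.ofReal ((ε : ℝ) / 2 + (ε : ℝ) / 2) := by
          rw [ENNReal.ofReal_add (by positivity) (by positivity)]
      _ = L + ε := by norm_num [ENNReal.ofReal_coe_nnreal]
  have hxsS : ∀ n, xs ∈ S (u n) := by
    intro n
    have key : lam * edist xs (u n) ≤ f (u n) - L := by
      have htt : Tendsto (fun m => lam * edist xs (u m) + (f (u n) - f (u m))) atTop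
          (𝓝 (lam * 0 + (f (u n) - L))) :=
        (ENNReal.Tendsto.const_mul hedist0 (Or.inr hlamt)).add
          (ENNReal.Tendsto.sub tendsto_const_nhds hfL (Or.inl (hfnetop n)))
      rw [mul_zero, zero_add] at htt
      apply ge_of_tendsto htt
      filter_upwards [eventually_ge_atTop n] with m hm
      calc lam * edist xs (u n) ≤ lam * (edist xs (u m) + edist (u m) (u n)) :=
            mul_le_mul_right (edist_triangle _ _ _) _
        _ = lam * edist xs (u m) + lam * edist (u m) (u n) := mul_add _ _ _
        _ ≤ lam * edist xs (u m) + (f (u n) - f (u m)) :=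
            add_le_add_right (ENNReal.le_sub_of_add_le_left (hfnetop m) (hmono hm)) _
    show f xs + lam * edist xs (u n) ≤ f (u n)
    calc f xs + lam * edist xs (u n) ≤ L + (f (u n) - L) := add_le_add hfxs key
      _ = f (u n) := add_tsub_cancel_of_le (hLle n)
  refine ⟨xs, hu0 ▸ hxsS 0, ?_⟩
  intro z hz
  have hzS : ∀ n, z ∈ S (u n) := fun n => htrans hz (hxsS n)
  have hLz : L ≤ f z := by
    apply ENNReal.le_of_forall_pos_le_add
    intro ε hε _
    have h2 : (2 : ENNReal)⁻¹ < 1 := by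
      rw [ENNReal.inv_lt_one]; exact ENNReal.one_lt_two
    have hev : ∀ᶠ n in atTop, ((2 : ENNReal)⁻¹) ^ n < ε :=
      (ENNReal.tendsto_pow_atTop_nhds_zero_of_lt_one h2).eventually_lt_const
        (ENNReal.coe_pos.mpr hε)
    obtain ⟨n, hn⟩ := hev.exists
    calc L ≤ f (u (n + 1)) := hLle (n + 1)
      _ ≤ (⨅ w ∈ S (u n), f w) + (2 : ENNReal)⁻¹ ^ n := by rw [husucc]; exact hg2 _ _
      _ ≤ f z + (2 : ENNReal)⁻¹ ^ n := add_le_add_left (iInf₂_le z (hzS n)) _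
      _ ≤ f z + ε := add_le_add_right hn.le _
  have hfz_le : f z ≤ f xs := le_trans (self_le_add_right _ _) hz
  have hfz_top : f z ≠ ⊤ := ne_top_of_le_ne_top hLtop (hfz_le.trans hfxs)
  have h0 : lam * edist z xs = 0 := by
    have h1 : f z + lam * edist z xs ≤ f z + 0 := by
      rw [add_zero]; exact hz.trans (hfxs.trans hLz)
    have h2 := (ENNReal.add_le_add_iff_left hfz_top).mp h1
    exact le_antisymm h2 zero_le
  rcases mul_eq_zero.mp h0 with h | h
  · exact absurd h hlam0
  · exact edist_eq_zero.mp h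


/-- The (strong) slope of an extended-real-valued function `g` at a point `p`:
`0` if `p` is a local minimizer of `g`, and `limsup_{q→p} (g(p)−g(q))/d(q,p)`
otherwise. -/
noncomputable def strongSlope {P : Type*} [MetricSpace P] (g : P → ENNReal) (p : P) :
    ENNReal :=
  if ∀ᶠ q in nhds p, g p ≤ g q then 0
  else Filter.limsup (fun q => (g p - g q) / edist q p) (nhdsWithin p {p}ᶜ)

theorem strongSlope_le_of_eventually {P : Type*} [MetricSpace P] (g : P → ENNReal) (p : P)
    (lam : ENNReal) (h : ∀ᶠ q in nhds p, g p ≤ g q + lam * edist q p) :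
    strongSlope g p ≤ lam := by
  unfold strongSlope
  split_ifs with hmin
  · exact zero_le
  · apply Filter.limsup_le_of_le (by isBoundedDefault)
    filter_upwards [eventually_nhdsWithin_of_eventually_nhds h] with q hq
    apply ENNReal.div_le_of_le_mul
    rwa [tsub_le_iff_left]

/-- The strict outer slope with respect to `p` at `(pb, xb)` of the displacement
function `ν`. -/
noncomputable def strictOuterSlope {P X : Type*} [MetricSpace P] [MetricSpace X]
    (ν : P → X → ENNReal) (pb : P) (xb : X) : ENNReal :=
  ⨆ (ε : ℝ) (_ : 0 < ε),
    ⨅ (px : P × X) (_ : px.1 ∈ Metric.closedBall pb ε ∧ px.2 ∈ Metric.closedBall xb ε ∧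
        ν pb xb < ν px.1 px.2 ∧ ν px.1 px.2 < ν pb xb + ENNReal.ofReal ε),
      strongSlope (fun p => ν p px.2) px.1

/-- Theorem 4.1 (implicit multifunction theorem): under completeness of P,
Hausdorff upper semicontinuity of F(·,x), uniform Lipschitz lower semicontinuity
of F(pb,·) at (xb,ω) with modulus κ₀, and positivity α₀ of the strict outer slope
of the displacement, the solution mapping 𝓡(p) = {x : ω ∈ F(p,x)} is uniformly
hemiregular at (pb,xb) with modulus at most κ₀/α₀. -/
theorem implicit_multifunction_uniform_hemiregularity
    {P X Y : Type*} [MetricSpace P] [CompleteSpace P] [MetricSpace X] [MetricSpace Y]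
    (F : P → X → Set Y) (hclosed : ∀ p x, IsClosed (F p x))
    (ω : Y) (pb : P) (xb : X) (hbar : ω ∈ F pb xb)
    (husc : ∃ δ₀ : ℝ, 0 < δ₀ ∧ ∀ x ∈ Metric.closedBall xb δ₀,
        ∀ p ∈ Metric.closedBall pb δ₀, ∀ ε : ℝ, 0 < ε → ∃ δ : ℝ, 0 < δ ∧
          ∀ q ∈ Metric.closedBall p δ, ∀ y ∈ F q x,
            EMetric.infEdist y (F p x) ≤ ENNReal.ofReal ε)
    (κ₀ : ℝ) (hκ₀ : 0 ≤ κ₀)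
    (hLlsc : ∀ κ : ℝ, κ₀ < κ → ∃ r : ℝ, 0 < r ∧ ∀ x ∈ Metric.closedBall xb r,
        EMetric.infEdist ω (F pb x) ≤
          ENNReal.ofReal κ * EMetric.infEdist x {x' | ω ∈ F pb x'})
    (α₀ : ℝ) (hα₀ : 0 < α₀)
    (hslope : strictOuterSlope (fun p x => EMetric.infEdist ω (F p x)) pb xb =
        ENNReal.ofReal α₀) :
    ∀ κ' : ℝ, κ₀ / α₀ < κ' → ∃ δ : ℝ, 0 < δ ∧ ∀ x ∈ Metric.closedBall xb δ,
      EMetric.infEdist pb {p | ω ∈ F p x} ≤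
        ENNReal.ofReal κ' * EMetric.infEdist x {x' | ω ∈ F pb x'} := by
  intro κ' hκ'
  have hκ'pos : 0 < κ' := lt_of_le_of_lt (div_nonneg hκ₀ hα₀.le) hκ'
  rw [div_lt_iff₀ hα₀] at hκ'
  set κ := (κ₀ + κ' * α₀) / 2 with hκdef
  have hκα : 0 < κ' * α₀ := mul_pos hκ'pos hα₀
  have hκpos : 0 < κ := by rw [hκdef]; linarith
  have hκgt : κ₀ < κ := by rw [hκdef]; linarith
  have hκlt : κ < κ' * α₀ := by rw [hκdef]; linarith
  set lr := κ / κ' with hlrdef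
  have hlrpos : 0 < lr := div_pos hκpos hκ'pos
  have hlrlt : lr < α₀ := by
    rw [hlrdef, div_lt_iff₀ hκ'pos]; linarith
  set βr := (lr + α₀) / 2 with hβdef
  have hβ1 : lr < βr := by rw [hβdef]; linarith
  have hβ2 : βr < α₀ := by rw [hβdef]; linarith
  have hβpos : 0 < βr := lt_trans hlrpos hβ1
  have hkl : κ / lr = κ' := by
    rw [hlrdef, div_div_eq_mul_div, mul_comm, mul_div_assoc, div_self (ne_of_gt hκpos), mul_one]
  have hsl : ENNReal.ofReal βr <
      strictOuterSlope (fun p x => EMetric.infEdist ω (F p x)) pb xb := by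
    rw [hslope]; exact (ENNReal.ofReal_lt_ofReal_iff hα₀).mpr hβ2
  rw [strictOuterSlope, lt_iSup_iff] at hsl
  obtain ⟨ε₁, hsl⟩ := hsl
  rw [lt_iSup_iff] at hsl
  obtain ⟨hε₁, hinf⟩ := hsl
  obtain ⟨r, hr, hLl⟩ := hLlsc κ hκgt
  obtain ⟨δ₀, hδ₀, husc⟩ := husc
  set m := min r (min δ₀ ε₁) with hmdef
  have hm : 0 < m := lt_min hr (lt_min hδ₀ hε₁)
  set c := 1 + κ + κ' with hcdef
  have hc : 0 < c := by rw [hcdef]; linarith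
  set δ := m / (2 * c) with hδdef
  have hδpos : 0 < δ := by positivity
  have hbound : ∀ t : ℝ, 0 ≤ t → t ≤ c → t * δ ≤ m / 2 := by
    intro t ht htc
    rw [hδdef, ← mul_div_assoc, div_le_div_iff₀ (by positivity) (by norm_num)]
    nlinarith [hm.le]
  have hκ'δ : κ' * δ ≤ m / 2 := hbound κ' hκ'pos.le (by rw [hcdef]; linarith)
  have hκδ : κ * δ ≤ m / 2 := hbound κ hκpos.le (by rw [hcdef]; linarith)
  have hδm : δ ≤ m / 2 := by
    have := hbound 1 one_pos.le (by rw [hcdef]; linarith); linarith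
  have hmr : m ≤ r := min_le_left _ _
  have hmδ₀ : m ≤ δ₀ := le_trans (min_le_right _ _) (min_le_left _ _)
  have hmε₁ : m ≤ ε₁ := le_trans (min_le_right _ _) (min_le_right _ _)
  refine ⟨δ, hδpos, ?_⟩
  intro x hx
  rw [Metric.mem_closedBall] at hx
  have hxδ₀ : x ∈ Metric.closedBall xb δ₀ := by
    rw [Metric.mem_closedBall]; linarith
  set μ := EMetric.infEdist x {x' | ω ∈ F pb x'} with hμdef
  have hμδ : μ ≤ ENNReal.ofReal δ := by
    refine le_trans (EMetric.infEdist_le_edist_of_mem (show xb ∈ _ from hbar)) ?_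
    rw [edist_dist]
    exact ENNReal.ofReal_le_ofReal hx
  have hν : EMetric.infEdist ω (F pb x) ≤ ENNReal.ofReal κ * μ :=
    hLl x (by rw [Metric.mem_closedBall]; linarith)
  have hνδ : EMetric.infEdist ω (F pb x) ≤ ENNReal.ofReal (κ * δ) := by
    refine le_trans hν ?_
    rw [ENNReal.ofReal_mul hκpos.le]
    exact mul_le_mul_right hμδ _
  have hνtop : EMetric.infEdist ω (F pb x) ≠ ⊤ := ne_top_of_le_ne_top ENNReal.ofReal_ne_top hνδ
  set K := Metric.closedBall pb δ₀ with hKdef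
  haveI : CompleteSpace K := Metric.isClosed_closedBall.completeSpace_coe
  set f : K → ENNReal := fun p => EMetric.infEdist ω (F p.1 x) with hfdef
  set lam := ENNReal.ofReal lr with hlamdef
  have hlam0 : lam ≠ 0 := by
    rw [hlamdef]; simp [ENNReal.ofReal_eq_zero, not_le, hlrpos]
  have hlamt : lam ≠ ⊤ := by rw [hlamdef]; exact ENNReal.ofReal_ne_top
  set pbK : K := ⟨pb, Metric.mem_closedBall_self hδ₀.le⟩ with hpbK
  have hfK : ∀ p : K, ∀ ε : ℝ, 0 < ε → ∀ᶠ q in 𝓝 p, f p ≤ f q + ENNReal.ofReal ε := by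
    intro p ε hε
    obtain ⟨δ₂, hδ₂, hq⟩ := husc x hxδ₀ p.1 p.2 ε hε
    have hnb : {q : K | (q : P) ∈ Metric.closedBall p.1 δ₂} ∈ 𝓝 p := by
      apply continuous_subtype_val.continuousAt.preimage_mem_nhds
      exact Metric.closedBall_mem_nhds _ hδ₂
    filter_upwards [hnb] with q hqmem
    rw [← tsub_le_iff_right]
    show f p - ENNReal.ofReal ε ≤ EMetric.infEdist ω (F q.1 x)
    refine EMetric.le_infEdist.2 ?_
    intro y hy
    rw [tsub_le_iff_right]
    calc f p ≤ edist ω y + EMetric.infEdist y (F p.1 x) :=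
          EMetric.infEdist_le_edist_add_infEdist
      _ ≤ edist ω y + ENNReal.ofReal ε := add_le_add_right (hq q.1 hqmem y hy) _
  obtain ⟨xs, h1, h2⟩ := ekeland_enn f pbK hνtop lam hlam0 hlamt hfK
  have hfs_le : f xs ≤ f pbK := le_trans (self_le_add_right _ _) h1
  have hedist : edist xs.1 pb ≤ ENNReal.ofReal κ' * μ := by
    have hb : lam * edist xs pbK ≤ f pbK := le_trans (le_add_self) h1
    have he1 : edist xs pbK ≤ f pbK / lam := by
      rw [ENNReal.le_div_iff_mul_le (Or.inl hlam0) (Or.inl hlamt)]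
      rwa [mul_comm]
    have he3 : (ENNReal.ofReal κ * μ) / lam = ENNReal.ofReal κ' * μ := by
      rw [hlamdef, div_eq_mul_inv, mul_right_comm, ← div_eq_mul_inv,
        ← ENNReal.ofReal_div_of_pos hlrpos, hkl]
    calc edist xs.1 pb = edist xs pbK := rfl
      _ ≤ f pbK / lam := he1
      _ ≤ (ENNReal.ofReal κ * μ) / lam := ENNReal.div_le_div_right hν _
      _ = ENNReal.ofReal κ' * μ := he3
  have hedistδ : edist xs.1 pb ≤ ENNReal.ofReal (κ' * δ) := by
    refine le_trans hedist ?_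
    rw [ENNReal.ofReal_mul hκ'pos.le]
    exact mul_le_mul_right hμδ _
  have hdist : dist xs.1 pb ≤ κ' * δ := by
    rw [edist_dist] at hedistδ
    exact (ENNReal.ofReal_le_ofReal_iff (by positivity)).mp hedistδ
  by_cases h0 : f xs = 0
  · have hmem : ω ∈ F xs.1 x :=
      (EMetric.mem_iff_infEdist_zero_of_closed (hclosed _ _)).mpr h0
    refine le_trans
      (EMetric.infEdist_le_edist_of_mem (show xs.1 ∈ {p | ω ∈ F p x} from hmem)) ?_
    rw [edist_comm]
    exact hedist
  · exfalso
    have hfpos : 0 < f xs := pos_iff_ne_zero.mpr h0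
    have hdistδ₀ : dist xs.1 pb < δ₀ := by linarith
    set ρ := δ₀ - dist xs.1 pb with hρdef
    have hρ : 0 < ρ := by rw [hρdef]; linarith
    have hev : ∀ᶠ q in 𝓝 xs.1, EMetric.infEdist ω (F xs.1 x) ≤
        EMetric.infEdist ω (F q x) + lam * edist q xs.1 := by
      filter_upwards [Metric.ball_mem_nhds xs.1 hρ] with q hqball
      have hqK : q ∈ K := by
        rw [hKdef, Metric.mem_closedBall]
        have hd := Metric.mem_ball.mp hqball
        have h3 := dist_triangle q xs.1 pb
        rw [hρdef] at hd
        linarith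
      by_cases hle : f ⟨q, hqK⟩ + lam * edist (⟨q, hqK⟩ : K) xs ≤ f xs
      · have heq := h2 _ hle
        have hqeq : q = xs.1 := congrArg Subtype.val heq
        rw [hqeq]
        exact self_le_add_right _ _
      · push_neg at hle
        exact hle.le
    have hup : strongSlope (fun p => EMetric.infEdist ω (F p x)) xs.1 ≤ lam :=
      strongSlope_le_of_eventually _ _ _ hev
    have h00 : EMetric.infEdist ω (F pb xb) = 0 := EMetric.infEdist_zero_of_mem hbar
    have hcond : xs.1 ∈ Metric.closedBall pb ε₁ ∧ x ∈ Metric.closedBall xb ε₁ ∧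
        EMetric.infEdist ω (F pb xb) < EMetric.infEdist ω (F xs.1 x) ∧
        EMetric.infEdist ω (F xs.1 x) < EMetric.infEdist ω (F pb xb) + ENNReal.ofReal ε₁ := by
      refine ⟨?_, ?_, ?_, ?_⟩
      · rw [Metric.mem_closedBall]; linarith
      · rw [Metric.mem_closedBall]; linarith
      · rw [h00]; exact hfpos
      · rw [h00, zero_add]
        calc EMetric.infEdist ω (F xs.1 x) ≤ EMetric.infEdist ω (F pb x) := hfs_le
          _ ≤ ENNReal.ofReal (κ * δ) := hνδ
          _ < ENNReal.ofReal ε₁ := (ENNReal.ofReal_lt_ofReal_iff hε₁).mpr (by linarith)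
    have hlow : ENNReal.ofReal βr < strongSlope (fun p => EMetric.infEdist ω (F p x)) xs.1 := by
      refine lt_of_lt_of_le hinf ?_
      exact le_trans (iInf_le _ ((xs.1, x) : P × X)) (iInf_le _ hcond)
    have hlt : lam < ENNReal.ofReal βr := by
      rw [hlamdef]; exact (ENNReal.ofReal_lt_ofReal_iff hβpos).mpr hβ1
    exact absurd hup (not_le.mpr (lt_trans hlt hlow))
end
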